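/- Let σ = (Z, P) be a stability condition on a triangulated category D. If gldim σ < 1, then every indecomposable object of D is stable with respect to σ (i.e., every semistable object of any phase φ is a simple object of the abelian category P(φ)). -/

import Mathlib

open CategoryTheory CategoryTheory.Limits CategoryTheory.Pretriangulated

universe v u

variable (C : Type u) [Category.{v} C] [Preadditive C] [HasZeroObject C]
  [HasShift C ℤ] [∀ n : ℤ, (shiftFunctor C n).Additive] [Pretriangulated C]
  [HasFiniteBiproducts C]

/-- A Bridgeland stability condition, encoded by a central charge on objects and a slicing. -/
structure StabilityCondition where
  Z : C → ℂ
  P : ℝ → Set C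
  mem_of_iso : ∀ {φ : ℝ} {E F : C}, (E ≅ F) → E ∈ P φ → F ∈ P φ
  charge : ∀ {φ : ℝ} {E : C}, E ∈ P φ → ¬ IsZero E →
    ∃ m : ℝ, 0 < m ∧ Z E = (m : ℂ) * Complex.exp (Real.pi * φ * Complex.I)
  shift_mem : ∀ (φ : ℝ) (E : C), E ∈ P φ ↔ E⟦(1 : ℤ)⟧ ∈ P (φ + 1)
  sum_mem : ∀ {φ : ℝ} {X Y : C}, X ∈ P φ → Y ∈ P φ → (X ⊞ Y) ∈ P φ
  summand_mem : ∀ {φ : ℝ} {X Y : C}, (X ⊞ Y) ∈ P φ → X ∈ P φ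
  hom_zero : ∀ {φ₁ φ₂ : ℝ}, φ₂ < φ₁ → ∀ {E F : C}, E ∈ P φ₁ → F ∈ P φ₂ →
    ∀ f : E ⟶ F, f = 0
  HN : ∀ E : C, ¬ IsZero E → ∃ (n : ℕ) (obj : Fin (n + 1) → C) (φ : Fin n → ℝ),
    IsZero (obj 0) ∧ Nonempty (obj (Fin.last n) ≅ E) ∧ StrictAnti φ ∧
    ∀ i : Fin n, ∃ (A : C) (f : obj i.castSucc ⟶ obj i.succ) (g : obj i.succ ⟶ A)
      (h : A ⟶ (obj i.castSucc)⟦(1 : ℤ)⟧),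
      (Triangle.mk f g h ∈ distTriang C) ∧ A ∈ P (φ i) ∧ ¬ IsZero A

variable {C}

/-- `E` is semistable iff it lies in some slice. -/
def StabilityCondition.IsSemistable (σ : StabilityCondition C) (E : C) : Prop :=
  ∃ φ : ℝ, E ∈ σ.P φ

/-- The global dimension of a stability condition. -/
noncomputable def StabilityCondition.gldim (σ : StabilityCondition C) : EReal :=
  sSup {d : EReal | ∃ (φ₁ φ₂ : ℝ) (E F : C) (f : E ⟶ F),
    E ∈ σ.P φ₁ ∧ F ∈ σ.P φ₂ ∧ f ≠ 0 ∧ d = ((φ₂ - φ₁ : ℝ) : EReal)}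

/-- An object is indecomposable if it is nonzero and any biproduct decomposition is trivial. -/
def IsIndec (E : C) : Prop :=
  ¬ IsZero E ∧ ∀ (X Y : C), (E ≅ X ⊞ Y) → IsZero X ∨ IsZero Y

/-- `E` is stable of phase `φ`: it is a nonzero object of `P(φ)` admitting no nontrivial
extension decomposition inside `P(φ)` (i.e. it is simple in the abelian category `P(φ)`). -/
def StabilityCondition.IsStableOfPhase (σ : StabilityCondition C) (E : C) (φ : ℝ) : Prop :=
  E ∈ σ.P φ ∧ ¬ IsZero E ∧ ∀ (A B : C) (f : A ⟶ E) (g : E ⟶ B) (h : B ⟶ A⟦(1 : ℤ)⟧),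
    (Triangle.mk f g h ∈ distTriang C) → A ∈ σ.P φ → B ∈ σ.P φ →
    ¬ IsZero A → ¬ IsZero B → False

/-- The Krull–Schmidt property: every nonzero object is a finite biproduct of indecomposables. -/
def KrullSchmidt : Prop :=
  ∀ X : C, ¬ IsZero X → ∃ (m : ℕ) (f : Fin m → C),
    (∀ i, IsIndec (f i)) ∧ Nonempty (X ≅ ⨁ f)

/-- From `gldim σ < 1`, any morphism between slices with phase gap at least `1` vanishes. -/
lemma StabilityCondition.hom_zero_of_gldim_lt_one (σ : StabilityCondition C)
    (h : σ.gldim < 1) {φ₁ φ₂ : ℝ} (hφ : 1 ≤ φ₂ - φ₁) {E F : C}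
    (hE : E ∈ σ.P φ₁) (hF : F ∈ σ.P φ₂) (f : E ⟶ F) : f = 0 := by
  by_contra hf
  have h1 : ((φ₂ - φ₁ : ℝ) : EReal) ≤ σ.gldim :=
    le_sSup ⟨φ₁, φ₂, E, F, f, hE, hF, hf, rfl⟩
  have h2 : (1 : EReal) ≤ ((φ₂ - φ₁ : ℝ) : EReal) := by
    rw [show (1 : EReal) = ((1 : ℝ) : EReal) from rfl, EReal.coe_le_coe_iff]
    exact hφ
  exact absurd h (not_lt.2 (h2.trans h1))

/-- Vanishing of maps from a slice into the shift of an object filtered with factors of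
phases at least the phase of the source. -/
lemma StabilityCondition.filt_hom_zero (σ : StabilityCondition C) (h : σ.gldim < 1)
    {n : ℕ} (obj : Fin (n + 1) → C) (φ : Fin n → ℝ)
    (h0 : IsZero (obj 0))
    (tri : ∀ i : Fin n, ∃ (A : C) (f : obj i.castSucc ⟶ obj i.succ) (g : obj i.succ ⟶ A)
      (hh : A ⟶ (obj i.castSucc)⟦(1 : ℤ)⟧),
      (Triangle.mk f g hh ∈ distTriang C) ∧ A ∈ σ.P (φ i) ∧ ¬ IsZero A)
    {ψ : ℝ} (hψ : ∀ i, ψ ≤ φ i) {S : C} (hS : S ∈ σ.P ψ) :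
    ∀ (j : Fin (n + 1)) (u : S ⟶ (obj j)⟦(1 : ℤ)⟧), u = 0 := by
  intro j
  induction j using Fin.induction with
  | zero =>
    intro u
    exact ((shiftFunctor C (1 : ℤ)).map_isZero h0).eq_zero_of_tgt u
  | succ i ih =>
    intro u
    obtain ⟨A, f, g, hh, hT, hA, -⟩ := tri i
    have hA1 : A⟦(1 : ℤ)⟧ ∈ σ.P (φ i + 1) := (σ.shift_mem _ _).1 hA
    have hug : u ≫ g⟦(1 : ℤ)⟧' = 0 :=
      σ.hom_zero_of_gldim_lt_one h (by linarith [hψ i]) hS hA1 _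
    obtain ⟨v, hv⟩ := Triangle.coyoneda_exact₁ _
      (rot_of_distTriang _ hT) u hug
    rw [hv, ih v]; exact zero_comp

/-- If `gldim σ < 1` then every indecomposable object is stable. -/
theorem gldim_lt_one_totally_stable (σ : StabilityCondition C)
    (h : σ.gldim < 1) :
    ∀ E : C, IsIndec E → ∃ φ : ℝ, σ.IsStableOfPhase E φ := by
  intro E hE
  obtain ⟨hEnz, hEdec⟩ := hE
  -- Step 1: E is semistable.
  obtain ⟨n, obj, φ, h0, ⟨e⟩, hanti, tri⟩ := σ.HN E hEnz
  obtain ⟨φ₀, hEsem⟩ : ∃ φ₀ : ℝ, E ∈ σ.P φ₀ := by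
    obtain _ | k := n
    · exact absurd (h0.of_iso e.symm) hEnz
    · set i : Fin (k + 1) := Fin.last k with hi
      obtain ⟨A, f, g, hh, hT, hA, hAnz⟩ := tri i
      have hsucc : i.succ = Fin.last (k + 1) := by ext; simp [hi]
      have hh0 : hh = 0 :=
        σ.filt_hom_zero h obj φ h0 tri
          (fun i' => hanti.antitone (Fin.le_last i')) hA i.castSucc hh
      obtain ⟨e', he'₁, he'₂⟩ :=
        exists_iso_binaryBiproduct_of_distTriang (Triangle.mk f g hh) hT hh0
      -- `E ≅ obj i.castSucc ⊞ A`
      have e2 : obj i.succ ≅ E := by rw [hsucc]; exact e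
      have eE : E ≅ obj i.castSucc ⊞ A := e2.symm ≪≫ e'
      have hX : IsZero (obj i.castSucc) := by
        rcases hEdec _ _ eE with hX | hA'
        · exact hX
        · exact absurd hA' hAnz
      -- `obj i.castSucc ⊞ A ≅ A`
      have eA : obj i.castSucc ⊞ A ≅ A := by
        refine ⟨biprod.snd, biprod.inr, ?_, by simp⟩
        have h1 : (biprod.fst : obj i.castSucc ⊞ A ⟶ _) ≫
            (biprod.inl : obj i.castSucc ⟶ obj i.castSucc ⊞ A) = 0 := by
          rw [hX.eq_zero_of_tgt (biprod.fst : obj i.castSucc ⊞ A ⟶ _), zero_comp]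
        have := biprod.total (X := obj i.castSucc) (Y := A)
        rw [h1, zero_add] at this
        exact this
      exact ⟨φ i, σ.mem_of_iso (eA.symm ≪≫ eE.symm) hA⟩
  -- Step 2: E is stable of phase φ₀.
  refine ⟨φ₀, hEsem, hEnz, fun A B f g hh hT hA hB hAnz hBnz => ?_⟩
  have hh0 : hh = 0 := by
    have hA1 : A⟦(1 : ℤ)⟧ ∈ σ.P (φ₀ + 1) := (σ.shift_mem _ _).1 hA
    exact σ.hom_zero_of_gldim_lt_one h (by linarith) hB hA1 hh
  obtain ⟨e', -, -⟩ :=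
    exists_iso_binaryBiproduct_of_distTriang (Triangle.mk f g hh) hT hh0
  rcases hEdec _ _ e' with hX | hY
  · exact hAnz hX
  · exact hBnz hY
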